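/- Let $w_j = (1-\alpha)_{j-1\uparrow 1}$ for some $\alpha < 1$, and let $\Pi_n$ be a Gibbs$(\mathbf{w})$ partition of $[n]$ conditioned to have $k$ blocks. Let $B_i$ be the indicator that $i$ is the smallest element of its block. Then the law of $(B_1,\dots,B_{n-1})$ given $B_n = 1$ equals the law of the corresponding indicator vector for a Gibbs$(\mathbf{w})$ partition of $[n-1]$ conditioned to have $k-1$ blocks, and given $B_n = 0$ it equals the law for a Gibbs$(\mathbf{w})$ partition of $[n-1]$ conditioned to have $k$ blocks. -/

import Mathlib

open Finset

namespace GibbsDel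

variable {n : ℕ}

def embn (n : ℕ) : Fin n ↪ Fin (n+1) := ⟨Fin.castSucc, Fin.castSucc_injective n⟩

def up (B : Finset (Fin n)) : Finset (Fin (n+1)) := B.map (embn n)

def dn (B : Finset (Fin (n+1))) : Finset (Fin n) :=
  Finset.univ.filter (fun i => i.castSucc ∈ B)

lemma mem_up {B : Finset (Fin n)} {x : Fin (n+1)} :
    x ∈ up B ↔ ∃ i ∈ B, i.castSucc = x := by
  simp [up, embn, Finset.mem_map]

lemma castSucc_mem_up {B : Finset (Fin n)} {i : Fin n} :
    i.castSucc ∈ up B ↔ i ∈ B := by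
  simp only [mem_up]
  constructor
  · rintro ⟨j, hj, hji⟩
    rwa [← Fin.castSucc_injective n hji]
  · exact fun h => ⟨i, h, rfl⟩

lemma mem_dn {B : Finset (Fin (n+1))} {i : Fin n} :
    i ∈ dn B ↔ i.castSucc ∈ B := by simp [dn]

lemma last_not_mem_up (B : Finset (Fin n)) : Fin.last n ∉ up B := by
  simp only [mem_up]
  rintro ⟨i, -, hi⟩
  exact absurd hi (Fin.castSucc_lt_last i).ne

lemma dn_up (B : Finset (Fin n)) : dn (up B) = B := by
  ext i; rw [mem_dn, castSucc_mem_up]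

lemma up_dn (B : Finset (Fin (n+1))) : up (dn B) = B.erase (Fin.last n) := by
  ext x
  rcases eq_or_ne x (Fin.last n) with rfl | hx
  · simp [last_not_mem_up]
  · obtain ⟨y, rfl⟩ := Fin.exists_castSucc_eq.2 hx
    rw [castSucc_mem_up, mem_dn, Finset.mem_erase]
    simp [hx]

lemma card_up (B : Finset (Fin n)) : (up B).card = B.card := Finset.card_map _

lemma up_injective : Function.Injective (up (n := n)) := fun B C h => by
  rw [← dn_up B, h, dn_up]

lemma up_eq_empty {B : Finset (Fin n)} : up B = ∅ ↔ B = ∅ := Finset.map_eq_empty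

lemma disjoint_up {B C : Finset (Fin n)} (h : Disjoint B C) : Disjoint (up B) (up C) :=
  Finset.disjoint_map _ |>.2 h

lemma disjoint_dn {B C : Finset (Fin (n+1))} (h : Disjoint B C) : Disjoint (dn B) (dn C) := by
  rw [Finset.disjoint_left] at h ⊢
  intro i hi hi'
  exact h (mem_dn.1 hi) (mem_dn.1 hi')

/-- block weight -/
noncomputable def bw (α : ℝ) {γ : Type*} (A : Finset γ) : ℝ :=
  ∏ m ∈ Finset.range (A.card - 1), (1 - α + m)

lemma bw_up (α : ℝ) (A : Finset (Fin n)) : bw α (up A) = bw α A := by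
  simp [bw, card_up]

lemma bw_singleton (α : ℝ) {γ : Type*} (a : γ) : bw α {a} = 1 := by simp [bw]

lemma bw_insert_last (α : ℝ) {A : Finset (Fin n)} (hA : A.Nonempty) :
    bw α (insert (Fin.last n) (up A)) = bw α A * ((A.card : ℝ) - α) := by
  have hc : (insert (Fin.last n) (up A)).card = A.card + 1 := by
    rw [Finset.card_insert_of_notMem (last_not_mem_up A), card_up]
  have h1 : 1 ≤ A.card := Finset.card_pos.2 hA
  rw [bw, hc, Nat.add_sub_cancel]
  conv_lhs => rw [show A.card = (A.card - 1) + 1 from (Nat.succ_pred_eq_of_pos h1).symm]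
  rw [Finset.prod_range_succ, bw]
  have : ((A.card - 1 : ℕ) : ℝ) = (A.card : ℝ) - 1 := by
    rw [Nat.cast_sub h1]; norm_num
  rw [this]; ring

/-- partition weight -/
noncomputable def wgt (α : ℝ) {γ : Type*} [DecidableEq γ] {s : Finset γ}
    (P : Finpartition s) : ℝ := ∏ A ∈ P.parts, bw α A

/-- Extend a partition of `Fin n` by the singleton block `{last}`. -/
def extend1 (Q : Finpartition (Finset.univ : Finset (Fin n))) :
    Finpartition (Finset.univ : Finset (Fin (n+1))) where
  parts := insert {Fin.last n} (Q.parts.image up)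
  supIndep := by
    rw [Finset.supIndep_iff_pairwiseDisjoint]
    intro a ha b hb hab
    simp only [Finset.coe_insert, Set.mem_insert_iff, Finset.coe_image, Set.mem_image,
      Finset.mem_coe] at ha hb
    rcases ha with rfl | ⟨B, hB, rfl⟩ <;> rcases hb with rfl | ⟨C, hC, rfl⟩
    · exact absurd rfl hab
    · exact Finset.disjoint_singleton_left.2 (last_not_mem_up C)
    · exact Finset.disjoint_singleton_right.2 (last_not_mem_up B)
    · refine disjoint_up (Q.disjoint hB hC ?_)
      rintro rfl; exact hab rfl
  sup_parts := by
    ext x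
    simp only [Finset.mem_sup, Finset.mem_insert, Finset.mem_image, id, Finset.mem_univ,
      iff_true]
    rcases eq_or_ne x (Fin.last n) with rfl | hx
    · exact ⟨{Fin.last n}, Or.inl rfl, Finset.mem_singleton_self _⟩
    · obtain ⟨y, rfl⟩ := Fin.exists_castSucc_eq.2 hx
      exact ⟨up (Q.part y), Or.inr ⟨Q.part y, ⟨Q.part_mem.2 (Finset.mem_univ y), rfl⟩⟩,
        castSucc_mem_up.2 (Q.mem_part (Finset.mem_univ y))⟩
  bot_notMem := by
    simp only [Finset.bot_eq_empty, Finset.mem_insert, Finset.mem_image]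
    rintro (h | ⟨B, hB, hB'⟩)
    · exact Finset.singleton_ne_empty _ h.symm
    · exact Q.bot_notMem (by rw [Finset.bot_eq_empty, ← up_eq_empty.1 hB']; exact hB)

lemma singleton_last_not_mem_image_up (s : Finset (Finset (Fin n))) :
    ({Fin.last n} : Finset (Fin (n+1))) ∉ s.image up := by
  simp only [Finset.mem_image]
  rintro ⟨B, -, hB⟩
  exact last_not_mem_up B (hB ▸ Finset.mem_singleton_self _)

lemma extend1_parts (Q : Finpartition (Finset.univ : Finset (Fin n))) :
    (extend1 Q).parts = insert {Fin.last n} (Q.parts.image up) := rfl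

lemma card_extend1 (Q : Finpartition (Finset.univ : Finset (Fin n))) :
    (extend1 Q).parts.card = Q.parts.card + 1 := by
  rw [extend1_parts, Finset.card_insert_of_notMem (singleton_last_not_mem_image_up _),
    Finset.card_image_of_injective _ up_injective]

lemma extend1_part_last (Q : Finpartition (Finset.univ : Finset (Fin n))) :
    (extend1 Q).part (Fin.last n) = {Fin.last n} :=
  Finpartition.part_eq_of_mem _ (Finset.mem_insert_self _ _) (Finset.mem_singleton_self _)

lemma extend1_part_castSucc (Q : Finpartition (Finset.univ : Finset (Fin n))) (i : Fin n) :
    (extend1 Q).part i.castSucc = up (Q.part i) :=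
  Finpartition.part_eq_of_mem _
    (Finset.mem_insert_of_mem (Finset.mem_image_of_mem _ (Q.part_mem.2 (Finset.mem_univ i))))
    (castSucc_mem_up.2 (Q.mem_part (Finset.mem_univ i)))

lemma wgt_extend1 (α : ℝ) (Q : Finpartition (Finset.univ : Finset (Fin n))) :
    wgt α (extend1 Q) = wgt α Q := by
  rw [wgt, extend1_parts, Finset.prod_insert (singleton_last_not_mem_image_up _),
    bw_singleton, one_mul, Finset.prod_image (fun B _ C _ h => up_injective h)]
  exact Finset.prod_congr rfl fun B _ => bw_up α B

/-- Extend a partition of `Fin n` by adding `last` to the block `A`. -/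
def extend0 (Q : Finpartition (Finset.univ : Finset (Fin n))) (A : Finset (Fin n))
    (hA : A ∈ Q.parts) : Finpartition (Finset.univ : Finset (Fin (n+1))) where
  parts := insert (insert (Fin.last n) (up A)) ((Q.parts.erase A).image up)
  supIndep := by
    rw [Finset.supIndep_iff_pairwiseDisjoint]
    intro a ha b hb hab
    simp only [Finset.coe_insert, Set.mem_insert_iff, Finset.coe_image, Set.mem_image,
      Finset.mem_coe, Finset.mem_erase] at ha hb
    have key : ∀ C ∈ Q.parts, C ≠ A →
        Disjoint (insert (Fin.last n) (up A)) (up C) := by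
      intro C hC hCA
      rw [Finset.disjoint_insert_left]
      exact ⟨last_not_mem_up C, disjoint_up (Q.disjoint hA hC (Ne.symm hCA))⟩
    rcases ha with rfl | ⟨B, ⟨hBA, hB⟩, rfl⟩ <;> rcases hb with rfl | ⟨C, ⟨hCA, hC⟩, rfl⟩
    · exact absurd rfl hab
    · exact key C hC hCA
    · exact (key B hB hBA).symm
    · refine disjoint_up (Q.disjoint hB hC ?_)
      rintro rfl; exact hab rfl
  sup_parts := by
    ext x
    simp only [Finset.mem_sup, Finset.mem_insert, Finset.mem_image, id, Finset.mem_univ,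
      iff_true]
    rcases eq_or_ne x (Fin.last n) with rfl | hx
    · exact ⟨_, Or.inl rfl, Finset.mem_insert_self _ _⟩
    · obtain ⟨y, rfl⟩ := Fin.exists_castSucc_eq.2 hx
      by_cases hy : y ∈ A
      · exact ⟨_, Or.inl rfl, Finset.mem_insert_of_mem (castSucc_mem_up.2 hy)⟩
      · refine ⟨up (Q.part y), Or.inr ⟨Q.part y, ⟨Finset.mem_erase.2 ⟨?_, Q.part_mem.2
          (Finset.mem_univ y)⟩, rfl⟩⟩, castSucc_mem_up.2 (Q.mem_part (Finset.mem_univ y))⟩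
        intro h
        exact hy (h ▸ Q.mem_part (Finset.mem_univ y))
  bot_notMem := by
    simp only [Finset.bot_eq_empty, Finset.mem_insert, Finset.mem_image]
    rintro (h | ⟨B, hB, hB'⟩)
    · exact (Finset.insert_nonempty _ _).ne_empty h.symm
    · exact Q.bot_notMem (by rw [Finset.bot_eq_empty, ← up_eq_empty.1 hB']; exact (Finset.mem_erase.1 hB).2)

lemma insert_last_not_mem_image_up (A : Finset (Fin n)) (s : Finset (Finset (Fin n))) :
    insert (Fin.last n) (up A) ∉ s.image up := by
  simp only [Finset.mem_image]
  rintro ⟨B, -, hB⟩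
  exact last_not_mem_up B (hB ▸ Finset.mem_insert_self _ _)

lemma extend0_parts (Q : Finpartition (Finset.univ : Finset (Fin n))) (A : Finset (Fin n))
    (hA : A ∈ Q.parts) : (extend0 Q A hA).parts =
      insert (insert (Fin.last n) (up A)) ((Q.parts.erase A).image up) := rfl

lemma card_extend0 (Q : Finpartition (Finset.univ : Finset (Fin n))) (A : Finset (Fin n))
    (hA : A ∈ Q.parts) : (extend0 Q A hA).parts.card = Q.parts.card := by
  rw [extend0_parts, Finset.card_insert_of_notMem (insert_last_not_mem_image_up _ _),
    Finset.card_image_of_injective _ up_injective, Finset.card_erase_of_mem hA]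
  exact Nat.succ_pred_eq_of_pos (Finset.card_pos.2 ⟨A, hA⟩)

lemma extend0_part_last (Q : Finpartition (Finset.univ : Finset (Fin n))) (A : Finset (Fin n))
    (hA : A ∈ Q.parts) :
    (extend0 Q A hA).part (Fin.last n) = insert (Fin.last n) (up A) :=
  Finpartition.part_eq_of_mem _ (Finset.mem_insert_self _ _) (Finset.mem_insert_self _ _)

lemma extend0_part_castSucc_mem (Q : Finpartition (Finset.univ : Finset (Fin n)))
    (A : Finset (Fin n)) (hA : A ∈ Q.parts) {i : Fin n} (hi : i ∈ A) :
    (extend0 Q A hA).part i.castSucc = insert (Fin.last n) (up A) :=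
  Finpartition.part_eq_of_mem _ (Finset.mem_insert_self _ _)
    (Finset.mem_insert_of_mem (castSucc_mem_up.2 hi))

lemma extend0_part_castSucc_not_mem (Q : Finpartition (Finset.univ : Finset (Fin n)))
    (A : Finset (Fin n)) (hA : A ∈ Q.parts) {i : Fin n} (hi : i ∉ A) :
    (extend0 Q A hA).part i.castSucc = up (Q.part i) := by
  refine Finpartition.part_eq_of_mem _ ?_ (castSucc_mem_up.2 (Q.mem_part (Finset.mem_univ i)))
  refine Finset.mem_insert_of_mem (Finset.mem_image_of_mem _ (Finset.mem_erase.2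
    ⟨?_, Q.part_mem.2 (Finset.mem_univ i)⟩))
  intro h; exact hi (h ▸ Q.mem_part (Finset.mem_univ i))

lemma wgt_extend0 (α : ℝ) (Q : Finpartition (Finset.univ : Finset (Fin n)))
    (A : Finset (Fin n)) (hA : A ∈ Q.parts) :
    wgt α (extend0 Q A hA) = ((A.card : ℝ) - α) * wgt α Q := by
  have hAne : A.Nonempty := Q.nonempty_of_mem_parts hA
  rw [wgt, extend0_parts, Finset.prod_insert (insert_last_not_mem_image_up _ _),
    bw_insert_last α hAne, Finset.prod_image (fun B _ C _ h => up_injective h)]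
  have : ∏ B ∈ Q.parts.erase A, bw α (up B) = ∏ B ∈ Q.parts.erase A, bw α B :=
    Finset.prod_congr rfl fun B _ => bw_up α B
  rw [this, wgt, ← Finset.prod_erase_mul _ _ hA]
  ring


/-- Restrict a partition of `Fin (n+1)` to `Fin n` by deleting `last`. -/
def down (P : Finpartition (Finset.univ : Finset (Fin (n+1)))) :
    Finpartition (Finset.univ : Finset (Fin n)) :=
  Finpartition.ofErase (P.parts.image dn)
    (by
      rw [Finset.supIndep_iff_pairwiseDisjoint]
      intro a ha b hb hab
      simp only [Finset.coe_image, Set.mem_image, Finset.mem_coe] at ha hb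
      obtain ⟨B, hB, rfl⟩ := ha
      obtain ⟨C, hC, rfl⟩ := hb
      refine disjoint_dn (P.disjoint hB hC ?_)
      rintro rfl; exact hab rfl)
    (by
      ext i
      simp only [Finset.mem_sup, Finset.mem_image, id, Finset.mem_univ, iff_true]
      exact ⟨dn (P.part i.castSucc), ⟨P.part i.castSucc, P.part_mem.2 (Finset.mem_univ _), rfl⟩,
        mem_dn.2 (P.mem_part (Finset.mem_univ _))⟩)

lemma down_parts (P : Finpartition (Finset.univ : Finset (Fin (n+1)))) :
    (down P).parts = (P.parts.image dn).erase ∅ := rfl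

lemma down_extend1 (Q : Finpartition (Finset.univ : Finset (Fin n))) :
    down (extend1 Q) = Q := by
  ext1
  rw [down_parts, extend1_parts, Finset.image_insert, Finset.image_image]
  have h1 : dn ({Fin.last n} : Finset (Fin (n+1))) = ∅ := by
    ext i; simp [mem_dn, (Fin.castSucc_lt_last i).ne]
  have h2 : Q.parts.image (dn ∘ up) = Q.parts := by
    rw [show (dn ∘ up : Finset (Fin n) → Finset (Fin n)) = id from funext dn_up,
      Finset.image_id]
  rw [h1, h2, Finset.erase_insert (show (∅:Finset (Fin n)) ∉ Q.parts from Q.bot_notMem)]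

lemma down_extend0 (Q : Finpartition (Finset.univ : Finset (Fin n))) (A : Finset (Fin n))
    (hA : A ∈ Q.parts) : down (extend0 Q A hA) = Q := by
  ext1
  rw [down_parts, extend0_parts, Finset.image_insert, Finset.image_image]
  have h1 : dn (insert (Fin.last n) (up A)) = A := by
    ext i
    rw [mem_dn, Finset.mem_insert]
    simp [(Fin.castSucc_lt_last i).ne, castSucc_mem_up]
  have h2 : (Q.parts.erase A).image (dn ∘ up) = Q.parts.erase A := by
    rw [show (dn ∘ up : Finset (Fin n) → Finset (Fin n)) = id from funext dn_up,
      Finset.image_id]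
  rw [h1, h2, Finset.insert_erase hA, Finset.erase_eq_of_notMem]
  intro h; exact Q.bot_notMem h

lemma last_mem_iff_part_eq {P : Finpartition (Finset.univ : Finset (Fin (n+1)))}
    {B : Finset (Fin (n+1))} (hB : B ∈ P.parts) :
    Fin.last n ∈ B ↔ B = P.part (Fin.last n) :=
  ⟨fun h => (Finpartition.part_eq_of_mem _ hB h).symm,
   fun h => h ▸ P.mem_part (Finset.mem_univ _)⟩

lemma up_dn_of_last_not_mem {B : Finset (Fin (n+1))} (h : Fin.last n ∉ B) :
    up (dn B) = B := by rw [up_dn, Finset.erase_eq_of_notMem h]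

lemma extend1_down (P : Finpartition (Finset.univ : Finset (Fin (n+1))))
    (h : P.part (Fin.last n) = {Fin.last n}) : extend1 (down P) = P := by
  ext1
  rw [extend1_parts, down_parts]
  ext C
  simp only [Finset.mem_insert, Finset.mem_image, Finset.mem_erase]
  constructor
  · rintro (rfl | ⟨D, ⟨hDne, D', hD', rfl⟩, rfl⟩)
    · exact h ▸ P.part_mem.2 (Finset.mem_univ _)
    · have hlast : Fin.last n ∉ D' := by
        intro hl
        have hD'eq : D' = {Fin.last n} := ((last_mem_iff_part_eq hD').1 hl).trans h
        apply hDne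
        rw [hD'eq]
        ext i; simp [mem_dn, (Fin.castSucc_lt_last i).ne]
      rwa [up_dn_of_last_not_mem hlast]
  · intro hC
    rcases eq_or_ne C (P.part (Fin.last n)) with rfl | hne
    · exact Or.inl h
    · have hlast : Fin.last n ∉ C := fun hl => hne ((last_mem_iff_part_eq hC).1 hl)
      refine Or.inr ⟨dn C, ⟨?_, C, hC, rfl⟩, up_dn_of_last_not_mem hlast⟩
      intro hdn
      obtain ⟨x, hx⟩ := P.nonempty_of_mem_parts hC
      have hxl : x ≠ Fin.last n := fun hh => hlast (hh ▸ hx)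
      obtain ⟨y, rfl⟩ := Fin.exists_castSucc_eq.2 hxl
      exact absurd (mem_dn.2 hx) (by rw [hdn]; exact Finset.notMem_empty y)

lemma dn_part_last_mem (P : Finpartition (Finset.univ : Finset (Fin (n+1))))
    (h : (dn (P.part (Fin.last n))).Nonempty) :
    dn (P.part (Fin.last n)) ∈ (down P).parts := by
  rw [down_parts, Finset.mem_erase]
  exact ⟨h.ne_empty, Finset.mem_image_of_mem _ (P.part_mem.2 (Finset.mem_univ _))⟩

lemma extend0_down (P : Finpartition (Finset.univ : Finset (Fin (n+1))))
    (h : (dn (P.part (Fin.last n))).Nonempty) :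
    extend0 (down P) (dn (P.part (Fin.last n))) (dn_part_last_mem P h) = P := by
  set L := P.part (Fin.last n) with hL
  have hLmem : L ∈ P.parts := P.part_mem.2 (Finset.mem_univ _)
  have hupdnL : insert (Fin.last n) (up (dn L)) = L := by
    rw [up_dn, Finset.insert_erase (P.mem_part (Finset.mem_univ _))]
  ext1
  rw [extend0_parts, down_parts]
  ext C
  simp only [Finset.mem_insert, Finset.mem_image, Finset.mem_erase]
  constructor
  · rintro (rfl | ⟨D, ⟨hDL, hDne, D', hD', rfl⟩, rfl⟩)
    · exact hupdnL ▸ hLmem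
    · have hlast : Fin.last n ∉ D' := by
        intro hl
        exact hDL ((last_mem_iff_part_eq hD').1 hl ▸ rfl)
      rwa [up_dn_of_last_not_mem hlast]
  · intro hC
    rcases eq_or_ne C L with rfl | hne
    · exact Or.inl hupdnL.symm
    · have hlast : Fin.last n ∉ C := fun hl => hne ((last_mem_iff_part_eq hC).1 hl)
      refine Or.inr ⟨dn C, ⟨?_, ?_, C, hC, rfl⟩, up_dn_of_last_not_mem hlast⟩
      · intro hdn
        obtain ⟨y, hy⟩ := h
        have : y.castSucc ∈ C := mem_dn.1 (hdn ▸ hy)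
        exact hne (P.eq_of_mem_parts hC hLmem this (mem_dn.1 hy))
      · intro hdn
        obtain ⟨x, hx⟩ := P.nonempty_of_mem_parts hC
        have hxl : x ≠ Fin.last n := fun hh => hlast (hh ▸ hx)
        obtain ⟨y, rfl⟩ := Fin.exists_castSucc_eq.2 hxl
        exact absurd (mem_dn.2 hx) (by rw [hdn]; exact Finset.notMem_empty y)

lemma forall_up_le {B : Finset (Fin n)} {i : Fin n} :
    (∀ j ∈ up B, i.castSucc ≤ j) ↔ ∀ j ∈ B, i ≤ j := by
  constructor
  · intro h j hj
    exact Fin.castSucc_le_castSucc_iff.1 (h _ (castSucc_mem_up.2 hj))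
  · intro h j hj
    obtain ⟨j', hj', rfl⟩ := mem_up.1 hj
    exact Fin.castSucc_le_castSucc_iff.2 (h _ hj')

lemma ind_extend1 (Q : Finpartition (Finset.univ : Finset (Fin n))) (i : Fin n) :
    (∀ j ∈ (extend1 Q).part i.castSucc, i.castSucc ≤ j) ↔ ∀ j ∈ Q.part i, i ≤ j := by
  rw [extend1_part_castSucc, forall_up_le]

lemma ind_extend0 (Q : Finpartition (Finset.univ : Finset (Fin n))) (A : Finset (Fin n))
    (hA : A ∈ Q.parts) (i : Fin n) :
    (∀ j ∈ (extend0 Q A hA).part i.castSucc, i.castSucc ≤ j) ↔ ∀ j ∈ Q.part i, i ≤ j := by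
  by_cases hi : i ∈ A
  · rw [extend0_part_castSucc_mem Q A hA hi,
      Finpartition.part_eq_of_mem Q hA hi]
    constructor
    · intro h j hj
      exact Fin.castSucc_le_castSucc_iff.1
        (h _ (Finset.mem_insert_of_mem (castSucc_mem_up.2 hj)))
    · intro h j hj
      rcases Finset.mem_insert.1 hj with rfl | hj
      · exact Fin.le_last _
      · obtain ⟨j', hj', rfl⟩ := mem_up.1 hj
        exact Fin.castSucc_le_castSucc_iff.2 (h _ hj')
  · rw [extend0_part_castSucc_not_mem Q A hA hi, forall_up_le]

lemma min_extend1_last (Q : Finpartition (Finset.univ : Finset (Fin n))) :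
    ∀ j ∈ (extend1 Q).part (Fin.last n), Fin.last n ≤ j := by
  rw [extend1_part_last]
  intro j hj
  rw [Finset.mem_singleton] at hj
  exact hj.ge

lemma not_min_extend0_last (Q : Finpartition (Finset.univ : Finset (Fin n)))
    (A : Finset (Fin n)) (hA : A ∈ Q.parts) :
    ¬ ∀ j ∈ (extend0 Q A hA).part (Fin.last n), Fin.last n ≤ j := by
  rw [extend0_part_last]
  intro h
  obtain ⟨a, ha⟩ := Q.nonempty_of_mem_parts hA
  exact absurd (h _ (Finset.mem_insert_of_mem (castSucc_mem_up.2 ha)))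
    (Fin.castSucc_lt_last a).not_ge

lemma min_last_iff (P : Finpartition (Finset.univ : Finset (Fin (n+1)))) :
    (∀ j ∈ P.part (Fin.last n), Fin.last n ≤ j) ↔ P.part (Fin.last n) = {Fin.last n} := by
  constructor
  · intro h
    apply Finset.Subset.antisymm
    · intro j hj
      rw [Finset.mem_singleton]
      exact le_antisymm (Fin.le_last j) (h j hj)
    · simp only [Finset.singleton_subset_iff]
      exact P.mem_part (Finset.mem_univ _)
  · intro h j hj
    rw [h, Finset.mem_singleton] at hj
    exact hj.ge

lemma not_min_last_iff (P : Finpartition (Finset.univ : Finset (Fin (n+1)))) :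
    (¬ ∀ j ∈ P.part (Fin.last n), Fin.last n ≤ j) ↔ (dn (P.part (Fin.last n))).Nonempty := by
  constructor
  · intro h
    push_neg at h
    obtain ⟨j, hj, hj'⟩ := h
    obtain ⟨y, rfl⟩ := Fin.exists_castSucc_eq.2 hj'.ne
    exact ⟨y, mem_dn.2 hj⟩
  · rintro ⟨y, hy⟩ h
    exact absurd (h _ (mem_dn.1 hy)) (Fin.castSucc_lt_last y).not_ge

lemma dn_insert_last_up (A : Finset (Fin n)) : dn (insert (Fin.last n) (up A)) = A := by
  ext i
  rw [mem_dn, Finset.mem_insert]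
  simp [(Fin.castSucc_lt_last i).ne, castSucc_mem_up]

lemma sum_case1 (α : ℝ) (k : ℕ) (hk : 1 ≤ k)
    (p : Finpartition (Finset.univ : Finset (Fin n)) → Prop)
    (q : Finpartition (Finset.univ : Finset (Fin (n+1))) → Prop)
    [DecidablePred p] [DecidablePred q]
    (hpq : ∀ Q, q (extend1 Q) ↔ p Q) :
    ∑ P ∈ Finset.univ.filter (fun P : Finpartition (Finset.univ : Finset (Fin (n+1))) =>
        P.parts.card = k ∧ (∀ j ∈ P.part (Fin.last n), Fin.last n ≤ j) ∧ q P), wgt α P =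
    ∑ Q ∈ Finset.univ.filter (fun Q : Finpartition (Finset.univ : Finset (Fin n)) =>
        Q.parts.card = k - 1 ∧ p Q), wgt α Q := by
  refine Finset.sum_bij' (fun P _ => down P) (fun Q _ => extend1 Q) ?_ ?_ ?_ ?_ ?_
  · intro P hP
    rw [Finset.mem_filter] at hP ⊢
    obtain ⟨-, hcard, hmin, hq⟩ := hP
    have hE : extend1 (down P) = P := extend1_down P ((min_last_iff P).1 hmin)
    have hc := card_extend1 (down P)
    rw [hE] at hc
    refine ⟨Finset.mem_univ _, by omega, ?_⟩
    rw [← hpq (down P), hE]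
    exact hq
  · intro Q hQ
    rw [Finset.mem_filter] at hQ ⊢
    obtain ⟨-, hcard, hp⟩ := hQ
    refine ⟨Finset.mem_univ _, ?_, min_extend1_last Q, (hpq Q).2 hp⟩
    rw [card_extend1, hcard]
    omega
  · intro P hP
    rw [Finset.mem_filter] at hP
    exact extend1_down P ((min_last_iff P).1 hP.2.2.1)
  · intro Q _
    exact down_extend1 Q
  · intro P hP
    rw [Finset.mem_filter] at hP
    conv_lhs => rw [← extend1_down P ((min_last_iff P).1 hP.2.2.1)]
    exact wgt_extend1 α (down P)

lemma sum_case0 (α : ℝ) (k : ℕ)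
    (p : Finpartition (Finset.univ : Finset (Fin n)) → Prop)
    (q : Finpartition (Finset.univ : Finset (Fin (n+1))) → Prop)
    [DecidablePred p] [DecidablePred q]
    (hpq : ∀ Q A (hA : A ∈ Q.parts), q (extend0 Q A hA) ↔ p Q) :
    ∑ P ∈ Finset.univ.filter (fun P : Finpartition (Finset.univ : Finset (Fin (n+1))) =>
        P.parts.card = k ∧ (¬ ∀ j ∈ P.part (Fin.last n), Fin.last n ≤ j) ∧ q P), wgt α P =
    ((n : ℝ) - α * k) *
      ∑ Q ∈ Finset.univ.filter (fun Q : Finpartition (Finset.univ : Finset (Fin n)) =>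
        Q.parts.card = k ∧ p Q), wgt α Q := by
  rw [Finset.mul_sum]
  have step1 :
      ∑ P ∈ Finset.univ.filter (fun P : Finpartition (Finset.univ : Finset (Fin (n+1))) =>
          P.parts.card = k ∧ (¬ ∀ j ∈ P.part (Fin.last n), Fin.last n ≤ j) ∧ q P), wgt α P =
      ∑ x ∈ (Finset.univ.filter (fun Q : Finpartition (Finset.univ : Finset (Fin n)) =>
          Q.parts.card = k ∧ p Q)).sigma (fun Q => Q.parts),
        ((x.2.card : ℝ) - α) * wgt α x.1 := by
    refine Finset.sum_bij' (fun P _ => ⟨down P, dn (P.part (Fin.last n))⟩)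
      (fun x hx => extend0 x.1 x.2 (Finset.mem_sigma.1 hx).2) ?_ ?_ ?_ ?_ ?_
    · intro P hP
      rw [Finset.mem_filter] at hP
      obtain ⟨-, hcard, hmin, hq⟩ := hP
      have hne := (not_min_last_iff P).1 hmin
      have hA := dn_part_last_mem P hne
      have hE := extend0_down P hne
      have hc := card_extend0 (down P) _ hA
      rw [hE] at hc
      rw [Finset.mem_sigma, Finset.mem_filter]
      dsimp only
      refine ⟨⟨Finset.mem_univ _, by omega, ?_⟩, hA⟩
      rw [← hpq (down P) _ hA, hE]
      exact hq
    · rintro ⟨Q, A⟩ hx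
      have hA := (Finset.mem_sigma.1 hx).2
      have hQ := (Finset.mem_sigma.1 hx).1
      rw [Finset.mem_filter] at hQ ⊢
      obtain ⟨-, hcard, hp⟩ := hQ
      refine ⟨Finset.mem_univ _, ?_, not_min_extend0_last Q A hA, (hpq Q A hA).2 hp⟩
      rw [card_extend0]
      exact hcard
    · intro P hP
      rw [Finset.mem_filter] at hP
      exact extend0_down P ((not_min_last_iff P).1 hP.2.2.1)
    · rintro ⟨Q, A⟩ hx
      have hA := (Finset.mem_sigma.1 hx).2
      have h1 := down_extend0 Q A hA
      have h2 : dn ((extend0 Q A hA).part (Fin.last n)) = A := by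
        rw [extend0_part_last]
        exact dn_insert_last_up A
      refine Sigma.ext ?_ ?_
      · exact h1
      · refine heq_of_eq ?_
        show dn ((extend0 Q A hA).part (Fin.last n)) = A
        exact h2
    · intro P hP
      rw [Finset.mem_filter] at hP
      have hne := (not_min_last_iff P).1 hP.2.2.1
      have hA := dn_part_last_mem P hne
      have hE := extend0_down P hne
      conv_lhs => rw [← hE]
      exact wgt_extend0 α (down P) _ hA
  rw [step1, Finset.sum_sigma]
  refine Finset.sum_congr rfl fun Q hQ => ?_
  dsimp only
  rw [Finset.mem_filter] at hQ
  obtain ⟨-, hcard, -⟩ := hQ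
  have hsum : ∑ A ∈ Q.parts, ((A.card : ℝ) - α) = (n : ℝ) - α * k := by
    rw [Finset.sum_sub_distrib, Finset.sum_const, ← Nat.cast_sum]
    rw [Q.sum_card_parts, hcard]
    simp [Finset.card_fin, mul_comm]
  rw [← Finset.sum_mul, hsum]

end GibbsDel

/-- Deletion property of conditioned Gibbs(w) partitions with weights
`w_j = (1-α)(2-α)⋯(j-1-α)`, `α < 1`. Let `Π` be a Gibbs(w) partition of
`[n+1]` conditioned to have `k` blocks and let `B_i` indicate that `i` is the
smallest element of its block. Then, conditionally on `B_{n+1} = 1`, the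
vector `(B_1,…,B_n)` has the law of the corresponding indicator vector of a
Gibbs(w) partition of `[n]` conditioned to have `k-1` blocks; conditionally
on `B_{n+1} = 0` it has the law of the indicator vector for a Gibbs(w)
partition of `[n]` conditioned to have `k` blocks. Here laws are expressed as
ratios of sums of Gibbs weights. -/
theorem gibbs_conditioned_deletion (α : ℝ) (hα : α < 1) (n : ℕ) (hn : 1 ≤ n)
    (k : ℕ) (hk1 : 1 ≤ k) (hkn : k ≤ n + 1) (v : Fin n → Bool) :
    (2 ≤ k →
      (∑ P ∈ Finset.univ.filter
          (fun P : Finpartition (Finset.univ : Finset (Fin (n + 1))) =>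
            P.parts.card = k ∧
            (∀ j ∈ P.part (Fin.last n), Fin.last n ≤ j) ∧
            (∀ i : Fin n, ((∀ j ∈ P.part i.castSucc, i.castSucc ≤ j) ↔ v i = true))),
          ∏ A ∈ P.parts, ∏ m ∈ Finset.range (A.card - 1), (1 - α + m)) /
      (∑ P ∈ Finset.univ.filter
          (fun P : Finpartition (Finset.univ : Finset (Fin (n + 1))) =>
            P.parts.card = k ∧ (∀ j ∈ P.part (Fin.last n), Fin.last n ≤ j)),
          ∏ A ∈ P.parts, ∏ m ∈ Finset.range (A.card - 1), (1 - α + m)) =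
      (∑ Q ∈ Finset.univ.filter
          (fun Q : Finpartition (Finset.univ : Finset (Fin n)) =>
            Q.parts.card = k - 1 ∧
            (∀ i : Fin n, ((∀ j ∈ Q.part i, i ≤ j) ↔ v i = true))),
          ∏ A ∈ Q.parts, ∏ m ∈ Finset.range (A.card - 1), (1 - α + m)) /
      (∑ Q ∈ Finset.univ.filter
          (fun Q : Finpartition (Finset.univ : Finset (Fin n)) =>
            Q.parts.card = k - 1),
          ∏ A ∈ Q.parts, ∏ m ∈ Finset.range (A.card - 1), (1 - α + m))) ∧
    (k ≤ n →
      (∑ P ∈ Finset.univ.filter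
          (fun P : Finpartition (Finset.univ : Finset (Fin (n + 1))) =>
            P.parts.card = k ∧
            ¬ (∀ j ∈ P.part (Fin.last n), Fin.last n ≤ j) ∧
            (∀ i : Fin n, ((∀ j ∈ P.part i.castSucc, i.castSucc ≤ j) ↔ v i = true))),
          ∏ A ∈ P.parts, ∏ m ∈ Finset.range (A.card - 1), (1 - α + m)) /
      (∑ P ∈ Finset.univ.filter
          (fun P : Finpartition (Finset.univ : Finset (Fin (n + 1))) =>
            P.parts.card = k ∧ ¬ (∀ j ∈ P.part (Fin.last n), Fin.last n ≤ j)),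
          ∏ A ∈ P.parts, ∏ m ∈ Finset.range (A.card - 1), (1 - α + m)) =
      (∑ Q ∈ Finset.univ.filter
          (fun Q : Finpartition (Finset.univ : Finset (Fin n)) =>
            Q.parts.card = k ∧
            (∀ i : Fin n, ((∀ j ∈ Q.part i, i ≤ j) ↔ v i = true))),
          ∏ A ∈ Q.parts, ∏ m ∈ Finset.range (A.card - 1), (1 - α + m)) /
      (∑ Q ∈ Finset.univ.filter
          (fun Q : Finpartition (Finset.univ : Finset (Fin n)) =>
            Q.parts.card = k),
          ∏ A ∈ Q.parts, ∏ m ∈ Finset.range (A.card - 1), (1 - α + m))) := by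
  constructor
  · intro _
    have hnum :
        (∑ P ∈ Finset.univ.filter
            (fun P : Finpartition (Finset.univ : Finset (Fin (n + 1))) =>
              P.parts.card = k ∧
              (∀ j ∈ P.part (Fin.last n), Fin.last n ≤ j) ∧
              (∀ i : Fin n, ((∀ j ∈ P.part i.castSucc, i.castSucc ≤ j) ↔ v i = true))),
            ∏ A ∈ P.parts, ∏ m ∈ Finset.range (A.card - 1), (1 - α + m)) =
        (∑ Q ∈ Finset.univ.filter
            (fun Q : Finpartition (Finset.univ : Finset (Fin n)) =>
              Q.parts.card = k - 1 ∧
              (∀ i : Fin n, ((∀ j ∈ Q.part i, i ≤ j) ↔ v i = true))),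
            ∏ A ∈ Q.parts, ∏ m ∈ Finset.range (A.card - 1), (1 - α + m)) :=
      GibbsDel.sum_case1 α k hk1
        (fun Q => ∀ i : Fin n, ((∀ j ∈ Q.part i, i ≤ j) ↔ v i = true))
        (fun P => ∀ i : Fin n, ((∀ j ∈ P.part i.castSucc, i.castSucc ≤ j) ↔ v i = true))
        (fun Q => forall_congr' fun i => iff_congr (GibbsDel.ind_extend1 Q i) Iff.rfl)
    have hden :
        (∑ P ∈ Finset.univ.filter
            (fun P : Finpartition (Finset.univ : Finset (Fin (n + 1))) =>
              P.parts.card = k ∧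
              (∀ j ∈ P.part (Fin.last n), Fin.last n ≤ j) ∧ True),
            ∏ A ∈ P.parts, ∏ m ∈ Finset.range (A.card - 1), (1 - α + m)) =
        (∑ Q ∈ Finset.univ.filter
            (fun Q : Finpartition (Finset.univ : Finset (Fin n)) =>
              Q.parts.card = k - 1 ∧ True),
            ∏ A ∈ Q.parts, ∏ m ∈ Finset.range (A.card - 1), (1 - α + m)) :=
      GibbsDel.sum_case1 α k hk1 (fun _ => True) (fun _ => True) (fun _ => Iff.rfl)
    simp only [and_true] at hden
    rw [hnum, hden]
  · intro hkn'
    have hc : (0 : ℝ) < (n : ℝ) - α * k := by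
      have h1 : α * k < 1 * k := by
        refine mul_lt_mul_of_pos_right hα ?_
        exact_mod_cast hk1
      have h2 : (k : ℝ) ≤ n := by exact_mod_cast hkn'
      nlinarith
    have hnum :
        (∑ P ∈ Finset.univ.filter
            (fun P : Finpartition (Finset.univ : Finset (Fin (n + 1))) =>
              P.parts.card = k ∧
              ¬ (∀ j ∈ P.part (Fin.last n), Fin.last n ≤ j) ∧
              (∀ i : Fin n, ((∀ j ∈ P.part i.castSucc, i.castSucc ≤ j) ↔ v i = true))),
            ∏ A ∈ P.parts, ∏ m ∈ Finset.range (A.card - 1), (1 - α + m)) =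
        ((n : ℝ) - α * k) *
        (∑ Q ∈ Finset.univ.filter
            (fun Q : Finpartition (Finset.univ : Finset (Fin n)) =>
              Q.parts.card = k ∧
              (∀ i : Fin n, ((∀ j ∈ Q.part i, i ≤ j) ↔ v i = true))),
            ∏ A ∈ Q.parts, ∏ m ∈ Finset.range (A.card - 1), (1 - α + m)) :=
      GibbsDel.sum_case0 α k
        (fun Q => ∀ i : Fin n, ((∀ j ∈ Q.part i, i ≤ j) ↔ v i = true))
        (fun P => ∀ i : Fin n, ((∀ j ∈ P.part i.castSucc, i.castSucc ≤ j) ↔ v i = true))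
        (fun Q A hA => forall_congr' fun i => iff_congr (GibbsDel.ind_extend0 Q A hA i) Iff.rfl)
    have hden :
        (∑ P ∈ Finset.univ.filter
            (fun P : Finpartition (Finset.univ : Finset (Fin (n + 1))) =>
              P.parts.card = k ∧
              ¬ (∀ j ∈ P.part (Fin.last n), Fin.last n ≤ j) ∧ True),
            ∏ A ∈ P.parts, ∏ m ∈ Finset.range (A.card - 1), (1 - α + m)) =
        ((n : ℝ) - α * k) *
        (∑ Q ∈ Finset.univ.filter
            (fun Q : Finpartition (Finset.univ : Finset (Fin n)) =>
              Q.parts.card = k ∧ True),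
            ∏ A ∈ Q.parts, ∏ m ∈ Finset.range (A.card - 1), (1 - α + m)) :=
      GibbsDel.sum_case0 α k (fun _ => True) (fun _ => True) (fun _ _ _ => Iff.rfl)
    simp only [and_true] at hden
    rw [hnum, hden, mul_div_mul_left _ _ hc.ne']
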